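/- (Corollary 3: uniform separation away from the equivalence class.) Let K ≥ 2, m ≥ 2, θ ∈ Θ_{c_0} and 0 < ε < 1/2. Then there exists η > 0 such that every θ′ ∈ Θ_{c_0} satisfying d_W(θ′, θ̃) ≥ ε for all θ̃ ∈ Θ̃_{c_0}(θ) obeys ‖p_{θ,m} − p_{θ′,m}‖_1 ≥ η. -/

import Mathlib

open MeasureTheory Filter

noncomputable section

namespace TopicModel

/-- The probability simplex in `ℝ^K`. -/
def simplex (K : ℕ) : Set (Fin K → ℝ) := {h | (∀ k, 0 ≤ h k) ∧ ∑ k, h k = 1}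

/-- The parameter set `Θ_{c₀}`: `K` topic vectors, each a probability vector on `[V]`
with all entries at least `c₀`. -/
def Theta (c0 : ℝ) (V K : ℕ) : Set (Fin K → Fin V → ℝ) :=
  {θ | (∀ k ℓ, c0 ≤ θ k ℓ) ∧ ∀ k, ∑ ℓ, θ k ℓ = 1}

/-- `θ` is a tuple of probability vectors. -/
def IsParam {V K : ℕ} (θ : Fin K → Fin V → ℝ) : Prop :=
  (∀ k ℓ, 0 ≤ θ k ℓ) ∧ ∀ k, ∑ ℓ, θ k ℓ = 1

/-- Word probability `p_{θ,h}(v) = Σ_k h_k θ_k(v)`. -/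
def pWord {V K : ℕ} (θ : Fin K → Fin V → ℝ) (h : Fin K → ℝ) (v : Fin V) : ℝ :=
  ∑ k, h k * θ k v

/-- Document probability given mixing vector `h`: `p_{θ,h}(x) = Π_i p_{θ,h}(x_i)`. -/
def pDoc {V K : ℕ} (m : ℕ) (θ : Fin K → Fin V → ℝ) (h : Fin K → ℝ)
    (x : Fin m → Fin V) : ℝ :=
  ∏ i, pWord θ h (x i)

/-- Marginal document probability `p_{θ,m}(x) = ∫ p_{θ,h}(x) dν₀(h)`. -/
def pM {V K : ℕ} (ν0 : Measure (Fin K → ℝ)) (m : ℕ) (θ : Fin K → Fin V → ℝ)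
    (x : Fin m → Fin V) : ℝ :=
  ∫ h, pDoc m θ h x ∂ν0

/-- `ℓ¹`-norm of a `K × V` array: `‖δ‖₁ = Σ_k Σ_ℓ |δ_k(ℓ)|`. -/
def norm1 {V K : ℕ} (δ : Fin K → Fin V → ℝ) : ℝ := ∑ k, ∑ ℓ, |δ k ℓ|

/-- Wasserstein distance between parameters:
`d_W(θ,θ') = min_π Σ_k ‖θ_k − θ'_{π(k)}‖₁`. -/
def dW {V K : ℕ} (θ θ' : Fin K → Fin V → ℝ) : ℝ :=
  ⨅ π : Equiv.Perm (Fin K), ∑ k, ∑ ℓ, |θ k ℓ - θ' (π k) ℓ|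

/-- `L¹` distance between the document pmfs of two parameters. -/
def distL1 {V K : ℕ} (ν0 : Measure (Fin K → ℝ)) (m : ℕ)
    (θ θ' : Fin K → Fin V → ℝ) : ℝ :=
  ∑ x : Fin m → Fin V, |pM ν0 m θ x - pM ν0 m θ' x|

/-- The `p`-th order degeneracy criterion `𝔡_{m,p}(θ)`: the infimum over all
`δ` with `‖δ‖₁ = 1` and `Σ_ℓ δ_k(ℓ) = 0` for every `k`, of
`Σ_{x ∈ [V]^m} |∫ p_{θ,h}(x) Σ_{i₁<⋯<i_p} Π_t (δ_h(x_{i_t}) / p_{θ,h}(x_{i_t})) dν₀|`. -/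
def degen {V K : ℕ} (ν0 : Measure (Fin K → ℝ)) (m : ℕ) (θ : Fin K → Fin V → ℝ)
    (p : ℕ) : ℝ :=
  sInf {r : ℝ | ∃ δ : Fin K → Fin V → ℝ, norm1 δ = 1 ∧ (∀ k, ∑ ℓ, δ k ℓ = 0) ∧
    r = ∑ x : Fin m → Fin V,
      |∫ h, pDoc m θ h x *
        ∑ S ∈ Finset.powersetCard p (Finset.univ : Finset (Fin m)),
          ∏ i ∈ S, ((∑ k, h k * δ k (x i)) / pWord θ h (x i)) ∂ν0|}

/-- The order of degeneracy `𝔭(m;θ) ∈ ℕ ∪ {∞}`: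
the least `p ∈ {1,…,m}` with `𝔡_{m,p}(θ) > 0`, or `∞` if none exists. -/
def pOrder {V K : ℕ} (ν0 : Measure (Fin K → ℝ)) (m : ℕ) (θ : Fin K → Fin V → ℝ) : ℕ∞ :=
  sInf ((↑) '' {p : ℕ | 1 ≤ p ∧ p ≤ m ∧ 0 < degen ν0 m θ p})

/-- Assumption (A2) on the mixing measure `ν₀`: a Borel probability measure supported on the
simplex, exchangeable, with `E[h₁²] > E[h₁h₂]` and (when `K ≥ 3`)
`E[h₁³] + 2E[h₁h₂h₃] > 3E[h₁²h₂]`. -/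
structure NiceMixing (K : ℕ) (ν0 : Measure (Fin K → ℝ)) : Prop where
  prob : IsProbabilityMeasure ν0
  support : ν0 (simplex K)ᶜ = 0
  exch : ∀ π : Equiv.Perm (Fin K), Measure.map (fun h => h ∘ π) ν0 = ν0
  mom2 : ∀ i j : Fin K, i ≠ j → ∫ h, h i * h j ∂ν0 < ∫ h, h i ^ 2 ∂ν0
  mom3 : ∀ i j k : Fin K, i ≠ j → j ≠ k → i ≠ k →
    3 * ∫ h, h i ^ 2 * h j ∂ν0 < ∫ h, h i ^ 3 ∂ν0 + 2 * ∫ h, h i * h j * h k ∂ν0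

/-- The equivalence class `Θ̃_{c₀}(θ)` of parameters inducing the same document pmf as `θ`. -/
def equivClass {V K : ℕ} (ν0 : Measure (Fin K → ℝ)) (m : ℕ) (c0 : ℝ)
    (θ : Fin K → Fin V → ℝ) : Set (Fin K → Fin V → ℝ) :=
  {θ' | θ' ∈ Theta c0 V K ∧ ∀ x : Fin m → Fin V, pM ν0 m θ' x = pM ν0 m θ x}

/-- Probability of the event `A` under `n` i.i.d. draws from the pmf `p` on a finite set. -/
def prodProb {α : Type*} [Fintype α] (p : α → ℝ) (n : ℕ) (A : Set (Fin n → α)) : ℝ :=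
  ∑ xs : Fin n → α, A.indicator (fun ys => ∏ i, p (ys i)) xs

end TopicModel

namespace TopicModel

-- auxiliary lemmas

lemma ae_mem_simplex {K : ℕ} {ν0 : Measure (Fin K → ℝ)} (hν0 : NiceMixing K ν0) :
    ∀ᵐ h ∂ν0, h ∈ simplex K := by
  rw [ae_iff]
  exact hν0.support

lemma integrable_hprod {K m : ℕ} {ν0 : Measure (Fin K → ℝ)} (hν0 : NiceMixing K ν0)
    (c : Fin m → Fin K) : Integrable (fun h : Fin K → ℝ => ∏ i, h (c i)) ν0 := by
  haveI := hν0.prob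
  have hcont : Continuous (fun h : Fin K → ℝ => ∏ i, h (c i)) :=
    continuous_finset_prod _ (fun i _ => continuous_apply (c i))
  refine (integrable_const (1 : ℝ)).mono' hcont.aestronglyMeasurable ?_
  filter_upwards [ae_mem_simplex hν0] with h hh
  have h1 : ∀ k, h k ≤ 1 := by
    intro k
    calc h k = ∑ j ∈ {k}, h j := by simp
    _ ≤ ∑ j, h j := Finset.sum_le_sum_of_subset_of_nonneg (Finset.subset_univ _)
        (fun j _ _ => hh.1 j)
    _ = 1 := hh.2
  have : |∏ i, h (c i)| = ∏ i, h (c i) := abs_of_nonneg (Finset.prod_nonneg fun i _ => hh.1 _)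
  rw [Real.norm_eq_abs, this]
  exact Finset.prod_le_one (fun i _ => hh.1 _) (fun i _ => h1 _)

lemma pM_eq {V K m : ℕ} {ν0 : Measure (Fin K → ℝ)} (hν0 : NiceMixing K ν0)
    (θ : Fin K → Fin V → ℝ) (x : Fin m → Fin V) :
    pM ν0 m θ x = ∑ c : Fin m → Fin K,
      (∫ h, ∏ i, h (c i) ∂ν0) * ∏ i, θ (c i) (x i) := by
  have hexp : ∀ h : Fin K → ℝ, pDoc m θ h x =
      ∑ c : Fin m → Fin K, (∏ i, h (c i)) * ∏ i, θ (c i) (x i) := by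
    intro h
    unfold pDoc pWord
    rw [Finset.prod_univ_sum]
    simp [Fintype.piFinset_univ, Finset.prod_mul_distrib]
  unfold pM
  simp_rw [hexp]
  rw [integral_finset_sum]
  · exact Finset.sum_congr rfl fun c _ => integral_mul_const _ _
  · exact fun c _ => (integrable_hprod hν0 c).mul_const _

lemma continuous_pM {V K m : ℕ} {ν0 : Measure (Fin K → ℝ)} (hν0 : NiceMixing K ν0)
    (x : Fin m → Fin V) : Continuous (fun θ : Fin K → Fin V → ℝ => pM ν0 m θ x) := by
  have : (fun θ : Fin K → Fin V → ℝ => pM ν0 m θ x) = fun θ => ∑ c : Fin m → Fin K,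
      (∫ h, ∏ i, h (c i) ∂ν0) * ∏ i, θ (c i) (x i) := funext fun θ => pM_eq hν0 θ x
  rw [this]
  refine continuous_finset_sum _ fun c _ => Continuous.mul continuous_const ?_
  exact continuous_finset_prod _ fun i _ =>
    (continuous_apply (x i)).comp (continuous_apply (c i))

lemma dW_nonneg_terms {V K : ℕ} (θ θ' : Fin K → Fin V → ℝ) :
    BddBelow (Set.range fun π : Equiv.Perm (Fin K) =>
      ∑ k, ∑ ℓ, |θ k ℓ - θ' (π k) ℓ|) := by
  refine ⟨0, fun r ⟨π, hπ⟩ => ?_⟩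
  subst hπ
  exact Finset.sum_nonneg fun k _ => Finset.sum_nonneg fun ℓ _ => abs_nonneg _

lemma dW_self {V K : ℕ} (θ : Fin K → Fin V → ℝ) : dW θ θ ≤ 0 := by
  have := ciInf_le (dW_nonneg_terms θ θ) (Equiv.refl (Fin K))
  simpa [dW] using this

lemma le_dW_iff {V K : ℕ} (θ θ' : Fin K → Fin V → ℝ) (a : ℝ) :
    a ≤ dW θ θ' ↔ ∀ π : Equiv.Perm (Fin K),
      a ≤ ∑ k, ∑ ℓ, |θ k ℓ - θ' (π k) ℓ| := by
  constructor
  · intro hle π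
    exact hle.trans (ciInf_le (dW_nonneg_terms θ θ') π)
  · intro hall
    exact le_ciInf hall



lemma isCompact_Theta {V K : ℕ} {c0 : ℝ} (hc0 : 0 < c0) :
    IsCompact (Theta c0 V K) := by
  apply Metric.isCompact_of_isClosed_isBounded
  · have : Theta c0 V K =
        (⋂ k, ⋂ ℓ, {θ' : Fin K → Fin V → ℝ | c0 ≤ θ' k ℓ}) ∩
        ⋂ k, {θ' : Fin K → Fin V → ℝ | ∑ ℓ, θ' k ℓ = 1} := by
      ext θ'
      simp [Theta, Set.mem_iInter]
    rw [this]
    refine IsClosed.inter (isClosed_iInter fun k => isClosed_iInter fun ℓ => ?_)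
      (isClosed_iInter fun k => ?_)
    · exact isClosed_le continuous_const ((continuous_apply ℓ).comp (continuous_apply k))
    · exact isClosed_eq (continuous_finset_sum _
        fun ℓ _ => (continuous_apply ℓ).comp (continuous_apply k)) continuous_const
  · refine (Metric.isBounded_closedBall (x := (0 : Fin K → Fin V → ℝ)) (r := 1)).subset ?_
    intro θ' hθ'
    have hnn : ∀ k ℓ, 0 ≤ θ' k ℓ := fun k ℓ => hc0.le.trans (hθ'.1 k ℓ)
    have hle1 : ∀ k ℓ, θ' k ℓ ≤ 1 := by
      intro k ℓ
      calc θ' k ℓ = ∑ j ∈ {ℓ}, θ' k j := by simp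
      _ ≤ ∑ j, θ' k j := Finset.sum_le_sum_of_subset_of_nonneg (Finset.subset_univ _)
          (fun j _ _ => hnn k j)
      _ = 1 := hθ'.2 k
    simp only [Metric.mem_closedBall, dist_zero_right]
    refine pi_norm_le_iff_of_nonneg zero_le_one |>.2 fun k => ?_
    refine pi_norm_le_iff_of_nonneg zero_le_one |>.2 fun ℓ => ?_
    rw [Real.norm_eq_abs, abs_le]
    exact ⟨by linarith [hnn k ℓ], hle1 k ℓ⟩

lemma continuous_distL1 {V K m : ℕ} {ν0 : Measure (Fin K → ℝ)} (hν0 : NiceMixing K ν0)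
    (θ : Fin K → Fin V → ℝ) :
    Continuous (fun θ' : Fin K → Fin V → ℝ => distL1 ν0 m θ θ') := by
  unfold distL1
  refine continuous_finset_sum _ fun x _ => ?_
  exact continuous_abs.comp (Continuous.sub continuous_const (continuous_pM hν0 x))


/-- **Corollary 3 (uniform separation away from the equivalence class).**
For `0 < ε < 1/2` there exists `η > 0` such that every `θ' ∈ Θ_{c₀}` that is at
Wasserstein distance at least `ε` from every member of `Θ̃_{c₀}(θ)` satisfies
`‖p_{θ,m} − p_{θ',m}‖₁ ≥ η`. -/
theorem uniform_separation
    {V K m : ℕ} (hV : 2 ≤ V) (hK : 2 ≤ K) (hm : 2 ≤ m) {c0 : ℝ} (hc0 : 0 < c0)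
    (ν0 : Measure (Fin K → ℝ)) (hν0 : NiceMixing K ν0)
    (θ : Fin K → Fin V → ℝ) (hθ : θ ∈ Theta c0 V K)
    (ε : ℝ) (hε : 0 < ε) (hε2 : ε < 1 / 2) :
    ∃ η > (0 : ℝ), ∀ θ' ∈ Theta c0 V K,
      (∀ θtil ∈ equivClass ν0 m c0 θ, ε ≤ dW θ' θtil) →
      η ≤ distL1 ν0 m θ θ' := by
  set S : Set (Fin K → Fin V → ℝ) :=
    {θ' | θ' ∈ Theta c0 V K ∧ ∀ θtil ∈ equivClass ν0 m c0 θ, ε ≤ dW θ' θtil} with hS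
  rcases S.eq_empty_or_nonempty with hSe | hSne
  · refine ⟨1, one_pos, fun θ' hθ' hfar => ?_⟩
    exact absurd (hSe ▸ Set.mem_setOf.2 ⟨hθ', hfar⟩) (Set.notMem_empty θ')
  · -- S is closed
    have hSclosed : IsClosed S := by
      have hSeq : S = Theta c0 V K ∩
          ⋂ θtil ∈ equivClass ν0 m c0 θ, ⋂ π : Equiv.Perm (Fin K),
            {θ' : Fin K → Fin V → ℝ | ε ≤ ∑ k, ∑ ℓ, |θ' k ℓ - θtil (π k) ℓ|} := by
        ext θ'
        simp only [hS, Set.mem_setOf_eq, Set.mem_inter_iff, Set.mem_iInter]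
        constructor
        · exact fun ⟨h1, h2⟩ => ⟨h1, fun θtil ht π => (le_dW_iff _ _ _).1 (h2 θtil ht) π⟩
        · exact fun ⟨h1, h2⟩ => ⟨h1, fun θtil ht => (le_dW_iff _ _ _).2 (h2 θtil ht)⟩
      rw [hSeq]
      refine IsClosed.inter (isCompact_Theta hc0).isClosed ?_
      refine isClosed_biInter fun θtil _ => isClosed_iInter fun π => ?_
      refine isClosed_le continuous_const ?_
      refine continuous_finset_sum _ fun k _ => continuous_finset_sum _ fun ℓ _ => ?_
      exact continuous_abs.comp (Continuous.sub
        ((continuous_apply ℓ).comp (continuous_apply k)) continuous_const)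
    have hScompact : IsCompact S :=
      (isCompact_Theta hc0).of_isClosed_subset hSclosed (fun θ' hθ' => hθ'.1)
    have hfc : Continuous (fun θ' : Fin K → Fin V → ℝ => distL1 ν0 m θ θ') :=
      continuous_distL1 hν0 θ
    obtain ⟨θ0, hθ0S, hθ0min⟩ := hScompact.exists_isMinOn hSne hfc.continuousOn
    refine ⟨distL1 ν0 m θ θ0, ?_, fun θ' hθ' hfar => hθ0min ⟨hθ', hfar⟩⟩
    -- positivity
    have hnn : 0 ≤ distL1 ν0 m θ θ0 :=
      Finset.sum_nonneg fun x _ => abs_nonneg _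
    rcases hnn.lt_or_eq with hpos | heq
    · exact hpos
    · exfalso
      have hall : ∀ x : Fin m → Fin V, pM ν0 m θ0 x = pM ν0 m θ x := by
        intro x
        have := (Finset.sum_eq_zero_iff_of_nonneg
          (fun x _ => abs_nonneg (pM ν0 m θ x - pM ν0 m θ0 x))).1 heq.symm x (Finset.mem_univ x)
        have := abs_eq_zero.1 this
        linarith
      have hmem : θ0 ∈ equivClass ν0 m c0 θ := ⟨hθ0S.1, hall⟩
      have := hθ0S.2 θ0 hmem
      linarith [dW_self θ0]


end TopicModel
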